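/- arXiv:2302.05579 — 3 statements merged into one kernel-verified Lean document; each statement's English description precedes it below -/
import Mathlib

section
/- With the notation above, for every integer n ≥ 2 one has (Cτ)^n = (zv)²·(v²−1−z²)^{n−2}·CH − z²·(Cτ)^{n−1} in A. -/
/- R = ℤ[v^{±1}, z^{±1}] modelled as the group algebra of ℤ × ℤ over ℤ:
   the coefficient of v^i z^j in P is `P (i, j)`. -/
noncomputable section

abbrev R2 : Type := AddMonoidAlgebra ℤ (ℤ × ℤ)

/-- `v` -/
def V : R2 := AddMonoidAlgebra.single (1, 0) 1
/-- `v⁻¹` -/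
def Vi : R2 := AddMonoidAlgebra.single (-1, 0) 1
/-- `z` -/
def Z : R2 := AddMonoidAlgebra.single (0, 1) 1
/-- `z⁻¹` -/
def Zi : R2 := AddMonoidAlgebra.single (0, -1) 1
/-- `δ = (v⁻¹ - v) z⁻¹` -/
def δR : R2 := (Vi - V) * Zi

variable {A : Type*} [Ring A] [Algebra R2 A]

/-- `c = v⁻¹ σ` -/
def cOf (σ : Aˣ) : A := Vi • (σ : A)
/-- `c⁻¹ = v σ⁻¹` -/
def cInvOf (σ : Aˣ) : A := V • ((σ⁻¹ : Aˣ) : A)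
/-- `C = c₁ c₃` -/
def COf (σ₁ σ₃ : Aˣ) : A := cOf σ₁ * cOf σ₃
/-- `τ = (-zv) h` -/
def τOf (h : A) : A := (-(Z * V)) • h


lemma hVVi : V * Vi = (1:R2) := by
  simp [V, Vi, AddMonoidAlgebra.single_mul_single, AddMonoidAlgebra.one_def]
  rfl

theorem statement4 (A : Type*) [Ring A] [Algebra R2 A]
    (σ₁ σ₃ : Aˣ) (h H : A)
    (hcomm : (σ₁ : A) * σ₃ = (σ₃ : A) * σ₁)
    (hskein1 : Vi • (σ₁ : A) - V • ((σ₁⁻¹ : Aˣ) : A) = Z • (1 : A))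
    (hskein3 : Vi • (σ₃ : A) - V • ((σ₃⁻¹ : Aˣ) : A) = Z • (1 : A))
    (hH1 : (σ₁ : A) * H = (σ₃ : A) * H)
    (hH2 : H * (σ₁ : A) = H * (σ₃ : A))
    (hHdef : H = h * (σ₁ : A) * ((σ₃⁻¹ : Aˣ) : A) * h)
    (hh2 : h * h = δR • h)
    (hh : h * (σ₁ : A) * h = h)
    (n : ℕ) (hn : 2 ≤ n) :
    (COf σ₁ σ₃ * τOf h) ^ n =
      ((Z * V) ^ 2 * (V ^ 2 - 1 - Z ^ 2) ^ (n - 2)) • (COf σ₁ σ₃ * H)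
        - (Z ^ 2) • (COf σ₁ σ₃ * τOf h) ^ (n - 1) := by
  set s1 : A := (σ₁ : A) with hs1def
  set s3 : A := (σ₃ : A) with hs3def
  set s1i : A := ((σ₁⁻¹ : Aˣ) : A) with hs1idef
  set s3i : A := ((σ₃⁻¹ : Aˣ) : A) with hs3idef
  have e1 : s1i * s1 = 1 := σ₁.inv_mul
  have mono_tac : V * Vi = (1:R2) := hVVi
  have hs3 : s3 = (V*V) • s3i + (V*Z) • (1:A) := by
    have h2 := congrArg (fun x => V • x) hskein3
    simp only [smul_sub, smul_smul, hVVi, one_smul] at h2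
    have h3 : s3 - (V*V) • s3i = (V*Z) • (1:A) := by rw [← h2]
    rw [← h3]; abel
  have hs1 : s1 = (V*V) • s1i + (V*Z) • (1:A) := by
    have h2 := congrArg (fun x => V • x) hskein1
    simp only [smul_sub, smul_smul, hVVi, one_smul] at h2
    have h3 : s1 - (V*V) • s1i = (V*Z) • (1:A) := by rw [← h2]
    rw [← h3]; abel
  have hs1sq : s1 * s1 = (V*Z) • s1 + (V*V) • (1:A) := by
    calc s1 * s1 = ((V*V) • s1i + (V*Z) • (1:A)) * s1 := by rw [← hs1]
    _ = (V*V) • (s1i * s1) + (V*Z) • s1 := by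
        rw [add_mul, smul_mul_assoc, smul_mul_assoc, one_mul]
    _ = (V*Z) • s1 + (V*V) • (1:A) := by rw [e1]; abel
  have hs1H : h * s1 * H = H := by
    rw [hHdef]; simp only [← mul_assoc]; rw [hh]
  have hhH : h * H = δR • H := by
    rw [hHdef]; simp only [← mul_assoc, hh2, smul_mul_assoc]
  have hW2 : h * (s1 * (s3 * h)) = (V*V) • H + (V*Z) • h := by
    rw [hs3]
    simp only [add_mul, smul_mul_assoc, one_mul, mul_add, mul_smul_comm, ← mul_assoc]
    rw [hh, ← hHdef]
  have hW : h * (s1 * (s3 * H)) = (V*Z) • H + ((V*V) * δR) • H := by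
    rw [show s3 * H = s1 * H from hH1.symm,
      show s1 * (s1 * H) = (s1 * s1) * H from (mul_assoc _ _ _).symm, hs1sq]
    simp only [add_mul, smul_mul_assoc, one_mul, mul_add, mul_smul_comm, ← mul_assoc, hs1H, hhH,
      smul_smul]
  have hX : COf σ₁ σ₃ * τOf h = (-(Z*V) * (Vi*Vi)) • (s1 * (s3 * h)) := by
    simp only [COf, cOf, τOf, smul_mul_assoc, mul_smul_comm, smul_smul, mul_assoc]
    rfl
  have hCH : COf σ₁ σ₃ * H = (Vi*Vi) • (s1 * (s3 * H)) := by
    simp only [COf, cOf, smul_mul_assoc, mul_smul_comm, smul_smul, mul_assoc]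
    rfl
  have key1 : (COf σ₁ σ₃ * τOf h) * (COf σ₁ σ₃ * τOf h)
      = ((Z*V)^2) • (COf σ₁ σ₃ * H) - (Z^2) • (COf σ₁ σ₃ * τOf h) := by
    rw [hX, hCH]
    rw [smul_mul_assoc, mul_smul_comm, smul_smul]
    simp only [mul_assoc, hW2]
    simp only [mul_add, mul_smul_comm, smul_add, smul_smul, sub_eq_add_neg, ← neg_smul]
    congr 2
    · simp only [V, Vi, Z, Zi, δR, sub_mul, mul_sub, add_mul, mul_add, neg_mul, mul_neg, pow_two,
        AddMonoidAlgebra.single_mul_single, one_mul, mul_one, Prod.mk_add_mk, neg_neg]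
      norm_num
    · simp only [V, Vi, Z, Zi, δR, sub_mul, mul_sub, add_mul, mul_add, neg_mul, mul_neg, pow_two,
        AddMonoidAlgebra.single_mul_single, one_mul, mul_one, Prod.mk_add_mk, neg_neg]
      norm_num
  have key2 : (COf σ₁ σ₃ * τOf h) * (COf σ₁ σ₃ * H)
      = (V^2 - 1 - Z^2) • (COf σ₁ σ₃ * H) := by
    rw [hX, hCH]
    rw [smul_mul_assoc, mul_smul_comm, smul_smul]
    simp only [mul_assoc, hW]
    simp only [mul_add, mul_smul_comm, smul_add, smul_smul, ← add_smul]
    congr 1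
    simp only [V, Vi, Z, Zi, δR, sub_mul, mul_sub, add_mul, mul_add, neg_mul, mul_neg, pow_two,
      AddMonoidAlgebra.single_mul_single, one_mul, mul_one, Prod.mk_add_mk, neg_neg]
    norm_num
    ring_nf
  -- induction
  induction n, hn using Nat.le_induction with
  | base =>
    simpa [pow_two, pow_one] using key1
  | succ n hn2 ih =>
    have h2 : n + 1 - 2 = n - 2 + 1 := by omega
    have h1 : n + 1 - 1 = n := by omega
    have hn1 : n - 1 + 1 = n := by omega
    rw [h1, h2, pow_succ']
    rw [ih, mul_sub, mul_smul_comm, mul_smul_comm, key2, smul_smul]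
    rw [show (Z*V)^2 * (V^2-1-Z^2)^(n-2) * (V^2-1-Z^2)
        = (Z*V)^2 * (V^2-1-Z^2)^(n-2+1) from by ring]
    rw [← pow_succ', hn1]
    rw [← ih]
end
end

section
/- With the notation above, for every natural number n ≥ 0 one has ev(C^n) = (a_n·δ² + b_n·v^{-1}·δ)². In particular, every monomial occurring in ev(C^n) has v-exponent at most 4. -/
/- R = ℤ[v^{±1}, z^{±1}] modelled as the group algebra of ℤ × ℤ over ℤ:
   the coefficient of v^i z^j in P is `P (i, j)`. -/
noncomputable section

variable {A : Type*} [Ring A] [Algebra R2 A]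

/-- `(a_r, b_r)`: a₀ = 1, b₀ = 0, a_{r+1} = b_r, b_{r+1} = a_r + z b_r. -/
def abP : ℕ → R2 × R2
  | 0 => (1, 0)
  | r + 1 => ((abP r).2, (abP r).1 + Z * (abP r).2)

def aP (r : ℕ) : R2 := (abP r).1
def bP (r : ℕ) : R2 := (abP r).2

open Pointwise

/-- The v-degree of every monomial occurring in `P` is at most `k`. -/
def VdegLe (P : R2) (k : ℤ) : Prop := ∀ p ∈ P.coeff.support, p.1 ≤ k

lemma vdegLe_mono {P : R2} {k m : ℤ} (h : VdegLe P k) (hkm : k ≤ m) : VdegLe P m :=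
  fun p hp => (h p hp).trans hkm

lemma vdegLe_single {i j : ℤ} {c : ℤ} {k : ℤ} (hik : i ≤ k) :
    VdegLe (AddMonoidAlgebra.single (i, j) c) k := by
  intro p hp
  have := Finsupp.support_single_subset hp
  simp only [Finset.mem_singleton] at this
  subst this; exact hik

lemma vdegLe_one : VdegLe 1 0 := by
  have : (1 : R2) = AddMonoidAlgebra.single ((0 : ℤ), (0 : ℤ)) 1 := rfl
  rw [this]; exact vdegLe_single le_rfl

lemma vdegLe_zero (k : ℤ) : VdegLe 0 k := by
  intro p hp; simp at hp

lemma vdegLe_add {P Q : R2} {k : ℤ} (hP : VdegLe P k) (hQ : VdegLe Q k) :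
    VdegLe (P + Q) k := by
  intro p hp
  rw [AddMonoidAlgebra.coeff_add] at hp
  rcases Finset.mem_union.mp (Finsupp.support_add hp) with h | h
  · exact hP p h
  · exact hQ p h

lemma vdegLe_neg {P : R2} {k : ℤ} (hP : VdegLe P k) : VdegLe (-P) k := by
  intro p hp
  rw [AddMonoidAlgebra.coeff_neg, Finsupp.support_neg] at hp
  exact hP p hp

lemma vdegLe_sub {P Q : R2} {k : ℤ} (hP : VdegLe P k) (hQ : VdegLe Q k) :
    VdegLe (P - Q) k := by
  rw [sub_eq_add_neg]; exact vdegLe_add hP (vdegLe_neg hQ)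

lemma vdegLe_mul {P Q : R2} {k m : ℤ} (hP : VdegLe P k) (hQ : VdegLe Q m) :
    VdegLe (P * Q) (k + m) := by
  intro p hp
  have hmem := AddMonoidAlgebra.support_coeff_mul_subset P Q hp
  rw [Finset.mem_add] at hmem
  obtain ⟨a, ha, b, hb, hab⟩ := hmem
  have : p.1 = a.1 + b.1 := by rw [← hab]; rfl
  rw [this]
  exact add_le_add (hP a ha) (hQ b hb)

lemma vdegLe_pow {P : R2} {k : ℤ} (hP : VdegLe P k) (hk : 0 ≤ k) (n : ℕ) :
    VdegLe (P ^ n) (n * k) := by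
  induction n with
  | zero => simpa using vdegLe_one
  | succ m ih =>
      rw [pow_succ]
      have := vdegLe_mul ih hP
      have harith : (m : ℤ) * k + k = ((m + 1 : ℕ) : ℤ) * k := by push_cast; ring
      rw [harith] at this; exact this

lemma vdegLe_V : VdegLe V 1 := vdegLe_single le_rfl
lemma vdegLe_Vi : VdegLe Vi 0 := vdegLe_single (by norm_num)
lemma vdegLe_Z : VdegLe Z 0 := vdegLe_single le_rfl
lemma vdegLe_Zi : VdegLe Zi 0 := vdegLe_single le_rfl

lemma vdegLe_δR : VdegLe δR 1 := by
  have : VdegLe ((Vi - V) * Zi) (1 + 0) :=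
    vdegLe_mul (vdegLe_sub (vdegLe_mono vdegLe_Vi (by norm_num)) vdegLe_V) vdegLe_Zi
  simpa [δR] using this

lemma vdegLe_ab (n : ℕ) : VdegLe (aP n) 0 ∧ VdegLe (bP n) 0 := by
  induction n with
  | zero => exact ⟨vdegLe_one, vdegLe_zero 0⟩
  | succ m ih =>
      refine ⟨ih.2, ?_⟩
      have : VdegLe ((abP m).1 + Z * (abP m).2) 0 := by
        refine vdegLe_add ih.1 ?_
        have := vdegLe_mul vdegLe_Z ih.2
        simpa [bP] using this
      exact this

lemma ViV_eq_one : Vi * V = 1 := by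
  rw [Vi, V, AddMonoidAlgebra.single_mul_single]
  norm_num
  rfl

theorem statement10 (A : Type*) [Ring A] [Algebra R2 A]
    (σ₁ σ₃ : Aˣ) (h H : A)
    (hcomm : (σ₁ : A) * σ₃ = (σ₃ : A) * σ₁)
    (hskein1 : Vi • (σ₁ : A) - V • ((σ₁⁻¹ : Aˣ) : A) = Z • (1 : A))
    (hskein3 : Vi • (σ₃ : A) - V • ((σ₃⁻¹ : Aˣ) : A) = Z • (1 : A))
    (hH1 : (σ₁ : A) * H = (σ₃ : A) * H)
    (hH2 : H * (σ₁ : A) = H * (σ₃ : A))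
    (hHdef : H = h * (σ₁ : A) * ((σ₃⁻¹ : Aˣ) : A) * h)
    (hh2 : h * h = δR • h)
    (hh : h * (σ₁ : A) * h = h)
    (ev : A →ₗ[R2] R2)
    (htrace : ∀ x y : A, ev (x * y) = ev (y * x))
    (hev1 : ev 1 = δR ^ 4)
    (hevσ₁ : ev (σ₁ : A) = δR ^ 3)
    (hevσ₃ : ev (σ₃ : A) = δR ^ 3)
    (hevh : ev h = δR ^ 3)
    (hevσ₁σ₃ : ev ((σ₁ : A) * σ₃) = δR ^ 2)
    (hevσ₁h : ev ((σ₁ : A) * h) = δR ^ 2)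
    (hevσ₃h : ev ((σ₃ : A) * h) = δR ^ 2)
    (hevH : ev H = δR ^ 2)
    (hevσ₁σ₃h : ev ((σ₁ : A) * σ₃ * h) = δR)
    (hevσ₁H : ev ((σ₁ : A) * H) = δR)
    (n : ℕ) :
    ev ((COf σ₁ σ₃) ^ n) = (aP n * δR ^ 2 + bP n * Vi * δR) ^ 2 ∧
    ∀ i j : ℤ, (ev ((COf σ₁ σ₃) ^ n)).coeff (i, j) ≠ 0 → i ≤ 4 := by
  -- quadratic relation for c₁ and c₃
  have hquad : ∀ (σ : Aˣ), Vi • (σ : A) - V • ((σ⁻¹ : Aˣ) : A) = Z • (1 : A) →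
      cOf σ * cOf σ = Z • cOf σ + 1 := by
    intro σ hsk
    have hmul := congrArg (fun x => cOf σ * x) hsk
    simp only [mul_sub, mul_smul_comm, mul_one] at hmul
    have h2 : cOf σ * ((σ⁻¹ : Aˣ) : A) = Vi • (1 : A) := by
      rw [cOf, smul_mul_assoc, Units.mul_inv]
    rw [h2] at hmul
    have h3 : cOf σ * Vi • (σ : A) - V • Vi • (1 : A) = Z • cOf σ := by
      simpa using hmul
    have h4 : V • Vi • (1 : A) = (1 : A) := by
      rw [smul_smul, mul_comm, ViV_eq_one, one_smul]
    rw [h4] at h3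
    have : cOf σ * cOf σ = Z • cOf σ + 1 := by
      rw [cOf]
      rw [cOf] at h3
      linear_combination (norm := module) h3
    exact this
  have hq1 := hquad σ₁ hskein1
  have hq3 := hquad σ₃ hskein3
  -- powers of c
  have hpow : ∀ (σ : Aˣ), cOf σ * cOf σ = Z • cOf σ + 1 →
      ∀ m : ℕ, (cOf σ) ^ m = aP m • (1 : A) + bP m • cOf σ := by
    intro σ hq m
    induction m with
    | zero => simp [aP, bP, abP]
    | succ r ih =>
        have ha : aP (r+1) = bP r := rfl
        have hb : bP (r+1) = aP r + Z * bP r := rfl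
        rw [pow_succ, ih, ha, hb, add_mul, smul_mul_assoc, smul_mul_assoc, one_mul, hq]
        module
  have hp1 := hpow σ₁ hq1 n
  have hp3 := hpow σ₃ hq3 n
  -- c₁ and c₃ commute
  have hcom : Commute (cOf σ₁) (cOf σ₃) := by
    unfold cOf
    show _ = _
    rw [smul_mul_assoc, mul_smul_comm, smul_mul_assoc, mul_smul_comm, hcomm]
  have hCn : (COf σ₁ σ₃) ^ n = (cOf σ₁) ^ n * (cOf σ₃) ^ n := by
    rw [COf, hcom.mul_pow]
  -- evaluate
  have hc13 : cOf σ₁ * cOf σ₃ = (Vi * Vi) • ((σ₁ : A) * σ₃) := by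
    unfold cOf
    rw [smul_mul_assoc, mul_smul_comm, smul_smul]
  have hevC : ev ((COf σ₁ σ₃) ^ n)
      = aP n * aP n * δR ^ 4 + aP n * bP n * (Vi * δR ^ 3)
        + bP n * aP n * (Vi * δR ^ 3) + bP n * bP n * (Vi * Vi * δR ^ 2) := by
    rw [hCn, hp1, hp3]
    have expand : (aP n • (1 : A) + bP n • cOf σ₁) * (aP n • (1 : A) + bP n • cOf σ₃)
        = (aP n * aP n) • (1 : A) + (aP n * bP n) • cOf σ₃
          + (bP n * aP n) • cOf σ₁ + (bP n * bP n) • (cOf σ₁ * cOf σ₃) := by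
      simp only [add_mul, mul_add, smul_mul_assoc, mul_smul_comm, smul_smul, one_mul, mul_one]
      module
    rw [expand]
    simp only [map_add, map_smul, hev1, hc13, hevσ₁σ₃]
    have e1 : ev (cOf σ₁) = Vi * δR ^ 3 := by
      rw [cOf, map_smul, hevσ₁, smul_eq_mul]
    have e3 : ev (cOf σ₃) = Vi * δR ^ 3 := by
      rw [cOf, map_smul, hevσ₃, smul_eq_mul]
    rw [e1, e3]
    simp only [smul_eq_mul]
  constructor
  · rw [hevC]; ring
  · intro i j hij
    have hv : VdegLe (ev ((COf σ₁ σ₃) ^ n)) 4 := by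
      rw [hevC]
      obtain ⟨ha, hb⟩ := vdegLe_ab n
      have hδ := vdegLe_δR
      have hδ2 : VdegLe (δR ^ 2) 2 := by simpa using vdegLe_pow hδ (by norm_num) 2
      have hδ3 : VdegLe (δR ^ 3) 3 := by simpa using vdegLe_pow hδ (by norm_num) 3
      have hδ4 : VdegLe (δR ^ 4) 4 := by simpa using vdegLe_pow hδ (by norm_num) 4
      have t1 : VdegLe (aP n * aP n * δR ^ 4) 4 := by
        have := vdegLe_mul (vdegLe_mul ha ha) hδ4; simpa using this
      have t2 : VdegLe (aP n * bP n * (Vi * δR ^ 3)) 4 := by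
        have := vdegLe_mul (vdegLe_mul ha hb) (vdegLe_mul vdegLe_Vi hδ3)
        exact vdegLe_mono (by simpa using this) (by norm_num)
      have t3 : VdegLe (bP n * aP n * (Vi * δR ^ 3)) 4 := by
        have := vdegLe_mul (vdegLe_mul hb ha) (vdegLe_mul vdegLe_Vi hδ3)
        exact vdegLe_mono (by simpa using this) (by norm_num)
      have t4 : VdegLe (bP n * bP n * (Vi * Vi * δR ^ 2)) 4 := by
        have := vdegLe_mul (vdegLe_mul hb hb) (vdegLe_mul (vdegLe_mul vdegLe_Vi vdegLe_Vi) hδ2)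
        exact vdegLe_mono (by simpa using this) (by norm_num)
      exact vdegLe_add (vdegLe_add (vdegLe_add t1 t2) t3) t4
    exact hv (i, j) (Finsupp.mem_support_iff.mpr hij)
end
end

section
/- Define p_n ∈ R for integers n ≥ 1 by p₁ = 1 − v^{-2} and p_n = (v²−1)·(v²−1−z²)^{n−1} − z²·p_{n−1} for n ≥ 2. Then for every n ≥ 2, the coefficient of the monomial v^{2n}z^0 in p_n is 1, and every other monomial occurring in p_n has v-exponent at most 2n−2. -/
/- R = ℤ[v^{±1}, z^{±1}] modelled as the group algebra of ℤ × ℤ over ℤ: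
   the coefficient of v^i z^j in P is `P (i, j)`. -/
noncomputable section

/-- `p₁ = 1 - v⁻²`, and `p_n = (v²-1)(v²-1-z²)^{n-1} - z² p_{n-1}` for `n ≥ 2`
    (the value at `0` is a junk value). -/
def pSeq : ℕ → R2
  | 0 => 0
  | 1 => 1 - Vi ^ 2
  | n + 2 => (V ^ 2 - 1) * (V ^ 2 - 1 - Z ^ 2) ^ (n + 1) - Z ^ 2 * pSeq (n + 1)

/-- all nonzero coefficients have first exponent ≤ d -/
def Bd (f : R2) (d : ℤ) : Prop := ∀ x : ℤ × ℤ, f.coeff x ≠ 0 → x.1 ≤ d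

lemma Bd.mono {f : R2} {d e : ℤ} (h : Bd f d) (hde : d ≤ e) : Bd f e :=
  fun x hx => (h x hx).trans hde

lemma Bd.add {f g : R2} {d : ℤ} (hf : Bd f d) (hg : Bd g d) : Bd (f + g) d := by
  intro x hx
  rw [AddMonoidAlgebra.coeff_add, Finsupp.add_apply] at hx
  by_cases h : f.coeff x = 0
  · exact hg x (by simpa [h] using hx)
  · exact hf x h

lemma Bd.neg {f : R2} {d : ℤ} (hf : Bd f d) : Bd (-f) d := by
  intro x hx
  rw [AddMonoidAlgebra.coeff_neg, Finsupp.neg_apply, neg_ne_zero] at hx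
  exact hf x hx

lemma Bd.sub {f g : R2} {d : ℤ} (hf : Bd f d) (hg : Bd g d) : Bd (f - g) d := by
  rw [sub_eq_add_neg]; exact hf.add hg.neg

lemma Bd.single {a : ℤ × ℤ} {c : ℤ} {d : ℤ} (h : a.1 ≤ d) :
    Bd (AddMonoidAlgebra.single a c) d := by
  intro x hx
  rw [AddMonoidAlgebra.coeff_single, Finsupp.single_apply] at hx
  by_cases hax : a = x
  · exact hax ▸ h
  · simp [hax] at hx

lemma Bd.mul {f g : R2} {d e : ℤ} (hf : Bd f d) (hg : Bd g e) : Bd (f * g) (d + e) := by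
  intro x hx
  have hx' : x ∈ (f * g).coeff.support := Finsupp.mem_support_iff.mpr hx
  have := AddMonoidAlgebra.support_coeff_mul_subset f g hx'
  rw [Finset.mem_add] at this
  obtain ⟨a, ha, b, hb, rfl⟩ := this
  have h1 := hf a (Finsupp.mem_support_iff.mp ha)
  have h2 := hg b (Finsupp.mem_support_iff.mp hb)
  exact add_le_add h1 h2

/-- leading coefficient of v^d is 1, rest bounded by d-2 -/
def TopCoef (f : R2) (d : ℤ) : Prop :=
  f.coeff (d, 0) = 1 ∧ Bd (f - AddMonoidAlgebra.single ((d : ℤ), (0 : ℤ)) 1) (d - 2)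

lemma TopCoef.bd {f : R2} {d : ℤ} (h : TopCoef f d) : Bd f d := by
  have : f = (f - AddMonoidAlgebra.single ((d : ℤ), (0 : ℤ)) 1)
      + AddMonoidAlgebra.single ((d : ℤ), (0 : ℤ)) 1 := by ring
  rw [this]
  exact (h.2.mono (by omega)).add (Bd.single le_rfl)

lemma TopCoef.congr {f : R2} {d e : ℤ} (hf : TopCoef f d) (h : d = e) : TopCoef f e :=
  h ▸ hf

lemma TopCoef.mul {f g : R2} {d e : ℤ} (hf : TopCoef f d) (hg : TopCoef g e) :
    TopCoef (f * g) (d + e) := by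
  set sd : R2 := AddMonoidAlgebra.single ((d : ℤ), (0 : ℤ)) 1 with hsd
  set se : R2 := AddMonoidAlgebra.single ((e : ℤ), (0 : ℤ)) 1 with hse
  set s : R2 := AddMonoidAlgebra.single ((d + e : ℤ), (0 : ℤ)) 1 with hs
  have hss : sd * se = s := by
    rw [hsd, hse, hs, AddMonoidAlgebra.single_mul_single]
    simp [Prod.mk_add_mk]
  have key : f * g - s = (f - sd) * g + sd * (g - se) := by
    rw [← hss]; ring
  have hbd : Bd (f * g - s) (d + e - 2) := by
    rw [key]
    have h1 : Bd ((f - sd) * g) (d - 2 + e) := hf.2.mul hg.bd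
    have h2 : Bd (sd * (g - se)) (d + (e - 2)) := (Bd.single le_rfl).mul hg.2
    exact (h1.mono (by omega)).add (h2.mono (by omega))
  refine ⟨?_, hbd⟩
  have h0 : (f * g - s).coeff ((d + e : ℤ), (0 : ℤ)) = 0 := by
    by_contra hz
    have := hbd _ hz
    simp at this
  have hs1 : s.coeff ((d + e : ℤ), (0 : ℤ)) = 1 := by
    rw [hs, AddMonoidAlgebra.coeff_single, Finsupp.single_apply, if_pos rfl]
  rw [AddMonoidAlgebra.coeff_sub, Finsupp.sub_apply, hs1] at h0
  omega

lemma TopCoef.pow {f : R2} {d : ℤ} (hf : TopCoef f d) (k : ℕ) :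
    TopCoef (f ^ (k + 1)) (d * (k + 1)) := by
  induction k with
  | zero => simpa using hf
  | succ m ih =>
      have := (ih.mul hf).congr (e := d * ((m + 1 : ℕ) + 1)) (by push_cast; ring)
      rwa [← pow_succ] at this

lemma one_eq_single : (1 : R2) = AddMonoidAlgebra.single ((0:ℤ), (0:ℤ)) 1 := rfl

lemma vsq_eq : (V : R2) ^ 2 = AddMonoidAlgebra.single ((2:ℤ), (0:ℤ)) 1 := by
  rw [pow_two, V, AddMonoidAlgebra.single_mul_single]
  norm_num [Prod.mk_add_mk]

lemma zsq_eq : (Z : R2) ^ 2 = AddMonoidAlgebra.single ((0:ℤ), (2:ℤ)) 1 := by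
  rw [pow_two, Z, AddMonoidAlgebra.single_mul_single]
  norm_num [Prod.mk_add_mk]

lemma top_vsq : TopCoef (V ^ 2 - 1) 2 := by
  constructor
  · rw [AddMonoidAlgebra.coeff_sub, Finsupp.sub_apply, vsq_eq, one_eq_single]
    simp [AddMonoidAlgebra.coeff_single, Finsupp.single_apply, Prod.ext_iff]
  · have : V ^ 2 - 1 - AddMonoidAlgebra.single ((2:ℤ), (0:ℤ)) 1
        = -(1 : R2) := by rw [vsq_eq]; ring
    rw [this, one_eq_single]
    exact (Bd.single (by norm_num)).neg

lemma top_A : TopCoef (V ^ 2 - 1 - Z ^ 2) 2 := by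
  obtain ⟨h1, h2⟩ := top_vsq
  constructor
  · have hz0 : (Z ^ 2 : R2).coeff ((2:ℤ), (0:ℤ)) = 0 := by
      rw [zsq_eq]
      simp [AddMonoidAlgebra.coeff_single, Finsupp.single_apply, Prod.ext_iff]
    rw [AddMonoidAlgebra.coeff_sub, Finsupp.sub_apply, hz0, sub_zero]
    exact h1
  · have : V ^ 2 - 1 - Z ^ 2 - AddMonoidAlgebra.single ((2:ℤ), (0:ℤ)) 1
        = (V ^ 2 - 1 - AddMonoidAlgebra.single ((2:ℤ), (0:ℤ)) 1) - Z ^ 2 := by ring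
    rw [this, zsq_eq]
    exact h2.sub (Bd.single (by norm_num))

lemma bd_zsq : Bd (Z ^ 2) 0 := by
  rw [zsq_eq]; exact Bd.single le_rfl

lemma bd_p1 : Bd (pSeq 1) 0 := by
  have hvi : Vi ^ 2 = AddMonoidAlgebra.single ((-2:ℤ), (0:ℤ)) 1 := by
    rw [pow_two, Vi, AddMonoidAlgebra.single_mul_single]
    norm_num [Prod.mk_add_mk]
  show Bd (1 - Vi ^ 2) 0
  rw [one_eq_single, hvi]
  exact (Bd.single le_rfl).sub (Bd.single (by norm_num))

lemma top_pSeq : ∀ n : ℕ, 2 ≤ n → TopCoef (pSeq n) (2 * n) := by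
  intro n hn
  induction n with
  | zero => omega
  | succ m ih =>
      match m, ih with
      | 0, _ => omega
      | m + 1, ih =>
        have hgoal : ((2 : ℤ) * ((m + 1 + 1 : ℕ) : ℤ)) = 2 * ((m : ℤ) + 2) := by
          push_cast; ring
        rw [hgoal]
        show TopCoef ((V ^ 2 - 1) * (V ^ 2 - 1 - Z ^ 2) ^ (m + 1) - Z ^ 2 * pSeq (m + 1)) _
        have hQ : TopCoef ((V ^ 2 - 1) * (V ^ 2 - 1 - Z ^ 2) ^ (m + 1)) (2 * ((m : ℤ) + 2)) :=
          (top_vsq.mul (top_A.pow m)).congr (by push_cast; ring)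
        have hB : Bd (Z ^ 2 * pSeq (m + 1)) (2 * ((m : ℤ) + 2) - 2) := by
          rcases Nat.eq_zero_or_pos m with h1 | h2
          · subst h1
            exact (bd_zsq.mul bd_p1).mono (by norm_num)
          · have hb := (ih (by omega)).bd
            have := bd_zsq.mul hb
            refine this.mono ?_
            push_cast; omega
        have hB0 : (Z ^ 2 * pSeq (m + 1)).coeff ((2 * ((m : ℤ) + 2)), 0) = 0 := by
          by_contra hc
          have := hB _ hc
          simp at this
        constructor
        · rw [AddMonoidAlgebra.coeff_sub, Finsupp.sub_apply, hQ.1, hB0, sub_zero]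
        · have heq : (V ^ 2 - 1) * (V ^ 2 - 1 - Z ^ 2) ^ (m + 1) - Z ^ 2 * pSeq (m + 1)
              - AddMonoidAlgebra.single ((2 * ((m : ℤ) + 2)), (0:ℤ)) 1
              = ((V ^ 2 - 1) * (V ^ 2 - 1 - Z ^ 2) ^ (m + 1)
                - AddMonoidAlgebra.single ((2 * ((m : ℤ) + 2)), (0:ℤ)) 1)
                - Z ^ 2 * pSeq (m + 1) := by ring
          rw [heq]
          exact hQ.2.sub hB

theorem statement13 (n : ℕ) (hn : 2 ≤ n) :
    (pSeq n).coeff ((2 * n : ℤ), 0) = 1 ∧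
    ∀ i j : ℤ, (pSeq n).coeff (i, j) ≠ 0 → (i, j) ≠ ((2 * n : ℤ), 0) →
      i ≤ 2 * n - 2 := by
  obtain ⟨h1, h2⟩ := top_pSeq n hn
  refine ⟨h1, fun i j hij hne => ?_⟩
  have hkey : (pSeq n - AddMonoidAlgebra.single ((2 * n : ℤ), (0:ℤ)) 1 : R2).coeff (i, j) ≠ 0 := by
    rw [AddMonoidAlgebra.coeff_sub, Finsupp.sub_apply, AddMonoidAlgebra.coeff_single, Finsupp.single_apply]
    rw [if_neg (fun h => hne h.symm)]
    simpa using hij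
  have := h2 _ hkey
  simpa using this
end
end
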